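/- Let a < b be positive integers. Let V = V₁ ∪ V₂ ∪ V₃ be a finite set partitioned into three nonempty color classes with |V₂| = |V₃| = b, and fix v ∈ V₁. Let the arc set be A = ((V₁ \ {v}) × V₂) ∪ ({v} × V₃), and let f(S) = |{(u, w) ∈ A : u ∈ S and w ∉ S}| be the directed cut function. Let F be the feasible family for the bounds ℓ₁ = u₁ = 1, ℓ₂ = u₂ = b − a, ℓ₃ = u₃ = 0 and cardinality bound k = b − a + 1. Then for every S ∈ F: if v ∈ S then f(S) = b, and if v ∉ S then f(S) = a. -/
import Mathlib


open Finset

/-- The feasible family `F`: subsets of `V` of size at most `k` whose intersection with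
each color class `Vc c` has cardinality between `ℓ c` and `u c`. -/
def Feasible {α : Type*} [DecidableEq α] {C : ℕ} (V : Finset α) (Vc : Fin C → Finset α)
    (ℓ u : Fin C → ℕ) (k : ℕ) (S : Finset α) : Prop :=
  S ⊆ V ∧ S.card ≤ k ∧ ∀ c, ℓ c ≤ (S ∩ Vc c).card ∧ (S ∩ Vc c).card ≤ u c

/-- A set is extendable if it is contained in some feasible set. -/
def Extendable {α : Type*} [DecidableEq α] {C : ℕ} (V : Finset α) (Vc : Fin C → Finset α)
    (ℓ u : Fin C → ℕ) (k : ℕ) (S : Finset α) : Prop :=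
  ∃ S', Feasible V Vc ℓ u k S' ∧ S ⊆ S'

/-- In the hardness instance: `V = V₁ ∪ V₂ ∪ V₃` with `|V₂| = |V₃| = b`, arcs from
`V₁ \ {v}` to `V₂` and from `v` to `V₃`, bounds `ℓ₁ = u₁ = 1`, `ℓ₂ = u₂ = b - a`,
`ℓ₃ = u₃ = 0`, and cardinality bound `k = b - a + 1`, every feasible `S` has cut value
`b` if `v ∈ S` and `a` if `v ∉ S`. -/
theorem hardness_instance_values {α : Type*} [DecidableEq α]
    (a b : ℕ) (ha : 0 < a) (hab : a < b)
    (V V₁ V₂ V₃ : Finset α)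
    (hV : V = V₁ ∪ V₂ ∪ V₃)
    (h12 : Disjoint V₁ V₂) (h13 : Disjoint V₁ V₃) (h23 : Disjoint V₂ V₃)
    (h1ne : V₁.Nonempty) (h2ne : V₂.Nonempty) (h3ne : V₃.Nonempty)
    (h2card : V₂.card = b) (h3card : V₃.card = b)
    (v : α) (hv : v ∈ V₁)
    (A : Finset (α × α)) (hA : A = ((V₁ \ {v}) ×ˢ V₂) ∪ ({v} ×ˢ V₃))
    (f : Finset α → ℝ)
    (hf : ∀ S : Finset α,
      f S = ((A.filter fun p => p.1 ∈ S ∧ p.2 ∉ S).card : ℝ))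
    (S : Finset α)
    (hS : Feasible V ![V₁, V₂, V₃] ![1, b - a, 0] ![1, b - a, 0] (b - a + 1) S) :
    (v ∈ S → f S = b) ∧ (v ∉ S → f S = a) := by
  obtain ⟨hSV, hSk, hbounds⟩ := hS
  have hb0 := hbounds 0
  have hb1 := hbounds 1
  have hb2 := hbounds 2
  simp only [Matrix.cons_val_zero, Matrix.cons_val_one, Matrix.head_cons,
    Matrix.cons_val_two, Matrix.tail_cons] at hb0 hb1 hb2
  have h1 : (S ∩ V₁).card = 1 := le_antisymm hb0.2 hb0.1
  have h2 : (S ∩ V₂).card = b - a := le_antisymm hb1.2 hb1.1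
  have h3 : (S ∩ V₃).card = 0 := Nat.le_zero.mp hb2.2
  have key : ∀ (X Y : Finset α), ((X ×ˢ Y).filter fun p => p.1 ∈ S ∧ p.2 ∉ S)
      = (X ∩ S) ×ˢ (Y \ S) := by
    intro X Y
    ext ⟨x, y⟩
    simp only [Finset.mem_filter, Finset.mem_product, Finset.mem_inter, Finset.mem_sdiff]
    tauto
  have hdisj : Disjoint (((V₁ \ {v}) ∩ S) ×ˢ (V₂ \ S)) (({v} ∩ S) ×ˢ (V₃ \ S)) := by
    refine Finset.disjoint_left.mpr ?_
    rintro ⟨x, y⟩ hp hq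
    simp only [Finset.mem_product, Finset.mem_inter, Finset.mem_sdiff,
      Finset.mem_singleton] at hp hq
    exact hp.1.1.2 hq.1.1
  have hcard : (A.filter fun p => p.1 ∈ S ∧ p.2 ∉ S).card
      = ((V₁ \ {v}) ∩ S).card * (V₂ \ S).card + ({v} ∩ S).card * (V₃ \ S).card := by
    rw [hA, Finset.filter_union, key, key, Finset.card_union_of_disjoint hdisj,
      Finset.card_product, Finset.card_product]
  have hV2S : (V₂ \ S).card = a := by
    have h := Finset.card_inter_add_card_sdiff V₂ S
    rw [Finset.inter_comm] at h
    omega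
  have hV3S : (V₃ \ S).card = b := by
    have h := Finset.card_inter_add_card_sdiff V₃ S
    rw [Finset.inter_comm] at h
    omega
  constructor
  · intro hvS
    obtain ⟨w, hw⟩ := Finset.card_eq_one.mp h1
    have hvw : v = w := by
      have : v ∈ S ∩ V₁ := Finset.mem_inter.mpr ⟨hvS, hv⟩
      rw [hw, Finset.mem_singleton] at this
      exact this
    have e1 : ((V₁ \ {v}) ∩ S).card = 0 := by
      rw [Finset.card_eq_zero]
      ext x
      simp only [Finset.mem_inter, Finset.mem_sdiff, Finset.mem_singleton,
        Finset.notMem_empty, iff_false]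
      rintro ⟨⟨hx1, hxv⟩, hxS⟩
      have hx : x ∈ S ∩ V₁ := Finset.mem_inter.mpr ⟨hxS, hx1⟩
      rw [hw, Finset.mem_singleton] at hx
      exact hxv (hx.trans hvw.symm)
    have e2 : ({v} ∩ S).card = 1 := by
      rw [Finset.singleton_inter_of_mem hvS, Finset.card_singleton]
    rw [hf, hcard, e1, e2, hV3S]
    push_cast
    ring
  · intro hvS
    have e2 : ({v} ∩ S).card = 0 := by
      rw [Finset.singleton_inter_of_notMem hvS, Finset.card_empty]
    have e1 : ((V₁ \ {v}) ∩ S).card = 1 := by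
      have heq : (V₁ \ {v}) ∩ S = S ∩ V₁ := by
        ext x
        simp only [Finset.mem_inter, Finset.mem_sdiff, Finset.mem_singleton]
        constructor
        · rintro ⟨⟨hx1, _⟩, hxS⟩
          exact ⟨hxS, hx1⟩
        · rintro ⟨hxS, hx1⟩
          exact ⟨⟨hx1, fun h => hvS (h ▸ hxS)⟩, hxS⟩
      rw [heq, h1]
    rw [hf, hcard, e1, e2, hV2S]
    push_cast
    ring
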